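/- In the symmetric group on 8 letters (Equiv.Perm (Fin 8)), let σ = (3 6 7)(4 5 8) and τ = (1 8 2)(4 5 6). Then the subgroup H generated by σ and τ has order 168 and is isomorphic to PSL(2,7), i.e. to the quotient of the special linear group SL(2, ℤ/7ℤ) by its center. -/

import Mathlib

open Equiv

/-- `PSL(2,7)`: the quotient of `SL(2, ℤ/7ℤ)` by its center. -/
abbrev PSL27 :=
  Matrix.SpecialLinearGroup (Fin 2) (ZMod 7) ⧸
    Subgroup.center (Matrix.SpecialLinearGroup (Fin 2) (ZMod 7))

open Matrix

instance : Fact (Nat.Prime 7) := ⟨by norm_num⟩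
abbrev F7 := ZMod 7
abbrev SL7 := Matrix.SpecialLinearGroup (Fin 2) F7
abbrev PP := Projectivization F7 (Fin 2 → F7)

lemma mulVec_ne_zero (g : SL7) {v : Fin 2 → F7} (hv : v ≠ 0) :
    (g : Matrix (Fin 2) (Fin 2) F7) *ᵥ v ≠ 0 := by
  intro h
  have : g.toLin' v = 0 := by rwa [Matrix.SpecialLinearGroup.toLin'_apply, Matrix.toLin'_apply]
  exact hv (g.toLin'.map_eq_zero_iff.mp this)

noncomputable def pact (g : SL7) : PP → PP :=
  Projectivization.map (g.toLin' : (Fin 2 → F7) →ₗ[F7] (Fin 2 → F7))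
    (g.toLin'.injective)

lemma pact_mk (g : SL7) (v : Fin 2 → F7) (hv : v ≠ 0) :
    pact g (Projectivization.mk F7 v hv)
      = Projectivization.mk F7 ((g : Matrix (Fin 2) (Fin 2) F7) *ᵥ v) (mulVec_ne_zero g hv) := by
  unfold pact
  rw [Projectivization.map_mk]
  exact (Projectivization.mk_eq_mk_iff' _ _ _ _ _).mpr
    ⟨1, by rw [one_smul]; exact ((Matrix.SpecialLinearGroup.toLin'_apply g v).trans (Matrix.toLin'_apply _ v)).symm⟩

lemma pact_mul (g h : SL7) : pact (g * h) = pact g ∘ pact h := by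
  funext p
  induction p using Projectivization.ind with
  | h v hv =>
    simp only [Function.comp_apply, pact_mk, Matrix.SpecialLinearGroup.coe_mul,
      Matrix.mulVec_mulVec]

lemma pact_one : pact (1 : SL7) = id := by
  funext p
  induction p using Projectivization.ind with
  | h v hv => simp [pact_mk]

noncomputable def pperm (g : SL7) : Equiv.Perm PP :=
  { toFun := pact g
    invFun := pact g⁻¹
    left_inv := fun p => by
      rw [← Function.comp_apply (f := pact g⁻¹), ← pact_mul, inv_mul_cancel, pact_one, id_eq]
    right_inv := fun p => by
      rw [← Function.comp_apply (f := pact g), ← pact_mul, mul_inv_cancel, pact_one, id_eq] }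

noncomputable def Phi : SL7 →* Equiv.Perm PP where
  toFun := pperm
  map_one' := by ext p; simp [pperm, pact_one]
  map_mul' g h := by ext p; simp [pperm, pact_mul]

def vv : Fin 8 → (Fin 2 → F7) :=
  ![![0,1], ![1,1], ![2,1], ![5,1], ![3,1], ![1,0], ![6,1], ![4,1]]

lemma vv_ne (i : Fin 8) : vv i ≠ 0 := by fin_cases i <;> decide

noncomputable def ee (i : Fin 8) : PP := Projectivization.mk F7 (vv i) (vv_ne i)

lemma ee_inj : Function.Injective ee := by
  intro i j h
  rw [ee, ee, Projectivization.mk_eq_mk_iff'] at h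
  revert h
  revert i j
  decide

lemma ee_surj : Function.Surjective ee := by
  intro p
  induction p using Projectivization.ind with
  | h v hv =>
    have : ∃ i, ∃ a : F7, a • v = vv i := by revert hv; revert v; decide
    obtain ⟨i, a, ha⟩ := this
    exact ⟨i, (Projectivization.mk_eq_mk_iff' _ _ _ _ _).mpr ⟨a, ha⟩⟩

noncomputable def eE : Fin 8 ≃ PP := Equiv.ofBijective ee ⟨ee_inj, ee_surj⟩

noncomputable def conjE : Equiv.Perm PP ≃* Equiv.Perm (Fin 8) :=
  { toEquiv := eE.symm.permCongr
    map_mul' := fun p q => by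
      ext x
      simp [Equiv.permCongr_def, Equiv.Perm.mul_apply] }

noncomputable def phi : SL7 →* Equiv.Perm (Fin 8) := conjE.toMonoidHom.comp Phi

def Am : SL7 := ⟨!![2, 0; 5, 4], by decide⟩
def Bm : SL7 := ⟨!![1, 6; 3, 5], by decide⟩

def sg : Equiv.Perm (Fin 8) := c[(2 : Fin 8), 5, 6] * c[(3 : Fin 8), 4, 7]
def tu : Equiv.Perm (Fin 8) := c[(0 : Fin 8), 7, 1] * c[(3 : Fin 8), 4, 5]

lemma phi_eq_of (g : SL7) (p : Equiv.Perm (Fin 8))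
    (h : ∀ x : Fin 8, ∃ a : F7, a • vv (p x) = (g : Matrix (Fin 2) (Fin 2) F7) *ᵥ vv x) :
    phi g = p := by
  refine Equiv.ext fun x => ?_
  show eE.symm.permCongr (Phi g) x = p x
  rw [Equiv.permCongr_apply, Equiv.symm_symm, Equiv.symm_apply_eq]
  show pact g (eE x) = eE (p x)
  show pact g (ee x) = ee (p x)
  rw [ee, ee, pact_mk, Projectivization.mk_eq_mk_iff']
  exact h x

lemma phi_Am : phi Am = sg := phi_eq_of _ _ (by decide)
lemma phi_Bm : phi Bm = tu := phi_eq_of _ _ (by decide)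

lemma scalar_mulVec (r : F7) (v : Fin 2 → F7) :
    (Matrix.scalar (Fin 2) r) *ᵥ v = r • v := by
  funext i
  simp [Matrix.scalar, Matrix.mulVec, dotProduct, Fin.sum_univ_two,
    Matrix.diagonal, Pi.smul_apply]

lemma center_le_ker : Subgroup.center SL7 ≤ phi.ker := by
  intro g hg
  obtain ⟨r, hr, hsc⟩ := Matrix.SpecialLinearGroup.mem_center_iff.mp hg
  rw [Fintype.card_fin] at hr
  have hr0 : r ≠ 0 := by rintro rfl; simp at hr
  rw [MonoidHom.mem_ker]
  refine Equiv.ext fun x => ?_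
  show eE.symm.permCongr (Phi g) x = x
  rw [Equiv.permCongr_apply, Equiv.symm_symm, Equiv.symm_apply_eq]
  show pact g (ee x) = ee x
  rw [ee, pact_mk, Projectivization.mk_eq_mk_iff']
  refine ⟨r, ?_⟩
  rw [← hsc, scalar_mulVec]

lemma ker_le_center : phi.ker ≤ Subgroup.center SL7 := by
  intro g hg
  have key : ∀ v : Fin 2 → F7, v ≠ 0 → ∃ a : F7, a • v = (g : Matrix (Fin 2) (Fin 2) F7) *ᵥ v := by
    intro v hv
    have h1 : phi g = 1 := hg
    have h2 : Phi g = 1 := by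
      apply conjE.injective
      rw [MulEquiv.map_one]; exact h1
    have h3 : pact g (Projectivization.mk F7 v hv) = Projectivization.mk F7 v hv := by
      have := Equiv.ext_iff.mp (congrArg (fun (q : SL7 →* Equiv.Perm PP) => q g) rfl ▸ h2)
        (Projectivization.mk F7 v hv)
      exact this
    rw [pact_mk, Projectivization.mk_eq_mk_iff'] at h3
    exact h3
  have h0 := key ![1,0] (by decide)
  have h1 := key ![0,1] (by decide)
  have h2 := key ![1,1] (by decide)
  rw [Matrix.SpecialLinearGroup.mem_center_iff]
  rw [Fintype.card_fin]
  clear key hg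
  revert h0 h1 h2
  revert g
  set_option maxRecDepth 200000 in decide

def L7 : Subgroup SL7 := Subgroup.closure {Am, Bm}

def wEval (l : List Bool) : SL7 := (l.map (fun b => if b then Am else Bm)).prod

lemma wEval_mem (l : List Bool) : wEval l ∈ L7 := by
  induction l with
  | nil => exact one_mem _
  | cons b t ih =>
    rw [wEval, List.map_cons, List.prod_cons]
    refine mul_mem ?_ ih
    cases b
    · exact Subgroup.subset_closure (Set.mem_insert_of_mem _ rfl)
    · exact Subgroup.subset_closure (Set.mem_insert _ _)

lemma mem_of_word {g : SL7} (l : List Bool) (h : g = wEval l) : g ∈ L7 := h ▸ wEval_mem l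

lemma hT : ∀ (c : F7) (h : Matrix.det !![1, c; 0, 1] = 1), (⟨!![1, c; 0, 1], h⟩ : SL7) ∈ L7 := by
  intro c h
  have hc : c = 0 ∨ c = 1 ∨ c = 2 ∨ c = 3 ∨ c = 4 ∨ c = 5 ∨ c = 6 := by revert c; decide
  rcases hc with rfl|rfl|rfl|rfl|rfl|rfl|rfl
  · exact mem_of_word [] (Subtype.ext (show (!![1, 0; 0, 1] : Matrix (Fin 2) (Fin 2) F7) = (wEval []).val by decide))
  · exact mem_of_word [false, false, true, true, false, true, true, false, false] (Subtype.ext (show (!![1, 1; 0, 1] : Matrix (Fin 2) (Fin 2) F7) = (wEval [false, false, true, true, false, true, true, false, false]).val by decide))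
  · exact mem_of_word [true, true, false, true, true, false, true, true] (Subtype.ext (show (!![1, 2; 0, 1] : Matrix (Fin 2) (Fin 2) F7) = (wEval [true, true, false, true, true, false, true, true]).val by decide))
  · exact mem_of_word [true, true, false, false, true, true, false, false, true, true] (Subtype.ext (show (!![1, 3; 0, 1] : Matrix (Fin 2) (Fin 2) F7) = (wEval [true, true, false, false, true, true, false, false, true, true]).val by decide))
  · exact mem_of_word [true, false, true, false, true] (Subtype.ext (show (!![1, 4; 0, 1] : Matrix (Fin 2) (Fin 2) F7) = (wEval [true, false, true, false, true]).val by decide))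
  · exact mem_of_word [true, false, false, true, false, false, true] (Subtype.ext (show (!![1, 5; 0, 1] : Matrix (Fin 2) (Fin 2) F7) = (wEval [true, false, false, true, false, false, true]).val by decide))
  · exact mem_of_word [false, true, false, false, true, false] (Subtype.ext (show (!![1, 6; 0, 1] : Matrix (Fin 2) (Fin 2) F7) = (wEval [false, true, false, false, true, false]).val by decide))

lemma hL : ∀ (c : F7) (h : Matrix.det !![1, 0; c, 1] = 1), (⟨!![1, 0; c, 1], h⟩ : SL7) ∈ L7 := by
  intro c h
  have hc : c = 0 ∨ c = 1 ∨ c = 2 ∨ c = 3 ∨ c = 4 ∨ c = 5 ∨ c = 6 := by revert c; decide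
  rcases hc with rfl|rfl|rfl|rfl|rfl|rfl|rfl
  · exact mem_of_word [] (Subtype.ext (show (!![1, 0; 0, 1] : Matrix (Fin 2) (Fin 2) F7) = (wEval []).val by decide))
  · exact mem_of_word [true, false, true, false, false] (Subtype.ext (show (!![1, 0; 1, 1] : Matrix (Fin 2) (Fin 2) F7) = (wEval [true, false, true, false, false]).val by decide))
  · exact mem_of_word [true, true, false, true, false, false, true, true] (Subtype.ext (show (!![1, 0; 2, 1] : Matrix (Fin 2) (Fin 2) F7) = (wEval [true, true, false, true, false, false, true, true]).val by decide))
  · exact mem_of_word [true, true, false, true, true, false, false] (Subtype.ext (show (!![1, 0; 3, 1] : Matrix (Fin 2) (Fin 2) F7) = (wEval [true, true, false, true, true, false, false]).val by decide))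
  · exact mem_of_word [false, true, false, false, true] (Subtype.ext (show (!![1, 0; 4, 1] : Matrix (Fin 2) (Fin 2) F7) = (wEval [false, true, false, false, true]).val by decide))
  · exact mem_of_word [true, false, true, true, false, false, true] (Subtype.ext (show (!![1, 0; 5, 1] : Matrix (Fin 2) (Fin 2) F7) = (wEval [true, false, true, true, false, false, true]).val by decide))
  · exact mem_of_word [false, true, true, false, false, true, true] (Subtype.ext (show (!![1, 0; 6, 1] : Matrix (Fin 2) (Fin 2) F7) = (wEval [false, true, true, false, false, true, true]).val by decide))

lemma pair_cases : ∀ a b : F7, a * b = 1 →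
    (a=1∧b=1) ∨ (a=2∧b=4) ∨ (a=3∧b=5) ∨ (a=4∧b=2) ∨ (a=5∧b=3) ∨ (a=6∧b=6) := by decide

lemma hD : ∀ (a b : F7), a * b = 1 → ∀ (h : Matrix.det !![a, 0; 0, b] = 1),
    (⟨!![a, 0; 0, b], h⟩ : SL7) ∈ L7 := by
  intro a b hab h
  rcases pair_cases a b hab with ⟨rfl,rfl⟩|⟨rfl,rfl⟩|⟨rfl,rfl⟩|⟨rfl,rfl⟩|⟨rfl,rfl⟩|⟨rfl,rfl⟩
  · exact mem_of_word [] (Subtype.ext (show (!![1, 0; 0, 1] : Matrix (Fin 2) (Fin 2) F7) = (wEval []).val by decide))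
  · exact mem_of_word [true, false, true, false, false, true] (Subtype.ext (show (!![2, 0; 0, 4] : Matrix (Fin 2) (Fin 2) F7) = (wEval [true, false, true, false, false, true]).val by decide))
  · exact mem_of_word [true, true, false, false, true, false, true, false] (Subtype.ext (show (!![3, 0; 0, 5] : Matrix (Fin 2) (Fin 2) F7) = (wEval [true, true, false, false, true, false, true, false]).val by decide))
  · exact mem_of_word [true, true, false, true, true, false, false, true, true] (Subtype.ext (show (!![4, 0; 0, 2] : Matrix (Fin 2) (Fin 2) F7) = (wEval [true, true, false, true, true, false, false, true, true]).val by decide))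
  · exact mem_of_word [false, false, true, true, false, false, true, true, false, true] (Subtype.ext (show (!![5, 0; 0, 3] : Matrix (Fin 2) (Fin 2) F7) = (wEval [false, false, true, true, false, false, true, true, false, true]).val by decide))
  · exact mem_of_word [true, false, true, false, true, false, true, false] (Subtype.ext (show (!![6, 0; 0, 6] : Matrix (Fin 2) (Fin 2) F7) = (wEval [true, false, true, false, true, false, true, false]).val by decide))

def mkSL (M : Matrix (Fin 2) (Fin 2) F7) (h : M.det = 1) : SL7 := ⟨M, h⟩

lemma fin2_cases : ∀ (i j : Fin 2), i ≠ j → (i = 0 ∧ j = 1) ∨ (i = 1 ∧ j = 0) := by decide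

lemma transvec_mem (t : Matrix.TransvectionStruct (Fin 2) F7) (h : Matrix.det t.toMatrix = 1) :
    mkSL t.toMatrix h ∈ L7 := by
  obtain ⟨i, j, hij, c⟩ := t
  simp only [Matrix.TransvectionStruct.toMatrix_mk] at h ⊢
  rcases fin2_cases i j hij with ⟨rfl, rfl⟩ | ⟨rfl, rfl⟩
  · have hm : Matrix.transvection (0 : Fin 2) (1 : Fin 2) c = !![1, c; 0, 1] := by
      ext a b
      fin_cases a <;> fin_cases b <;>
        simp [Matrix.transvection, Matrix.single, Matrix.one_apply]
    have h' : Matrix.det !![(1 : F7), c; 0, 1] = 1 := hm ▸ h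
    have heq : mkSL _ h = mkSL _ h' := Subtype.ext hm
    rw [heq]
    exact hT c h'
  · have hm : Matrix.transvection (1 : Fin 2) (0 : Fin 2) c = !![1, 0; c, 1] := by
      ext a b
      fin_cases a <;> fin_cases b <;>
        simp [Matrix.transvection, Matrix.single, Matrix.one_apply]
    have h' : Matrix.det !![(1 : F7), 0; c, 1] = 1 := hm ▸ h
    have heq : mkSL _ h = mkSL _ h' := Subtype.ext hm
    rw [heq]
    exact hL c h'

lemma prodlist_mem (l : List (Matrix.TransvectionStruct (Fin 2) F7))
    (h : Matrix.det (l.map Matrix.TransvectionStruct.toMatrix).prod = 1) :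
    mkSL (l.map Matrix.TransvectionStruct.toMatrix).prod h ∈ L7 := by
  induction l with
  | nil =>
    exact show (1 : SL7) ∈ L7 from one_mem L7
  | cons t l ih =>
    have hdt : Matrix.det t.toMatrix = 1 := t.det
    have hdl : Matrix.det (l.map Matrix.TransvectionStruct.toMatrix).prod = 1 :=
      Matrix.TransvectionStruct.det_toMatrix_prod l
    have heq : mkSL ((t :: l).map Matrix.TransvectionStruct.toMatrix).prod h
        = mkSL t.toMatrix hdt * mkSL (l.map Matrix.TransvectionStruct.toMatrix).prod hdl := by
      apply Subtype.ext
      simp [mkSL, List.map_cons, List.prod_cons]; rfl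
    rw [heq]
    exact mul_mem (transvec_mem t hdt) (ih hdl)

lemma L7_eq_top : L7 = ⊤ := by
  rw [eq_top_iff]
  intro g _hg
  obtain ⟨l1, l2, D, hdec⟩ :=
    Matrix.Pivot.exists_list_transvec_mul_diagonal_mul_list_transvec (g : Matrix (Fin 2) (Fin 2) F7)
  have hd1 : Matrix.det (l1.map Matrix.TransvectionStruct.toMatrix).prod = 1 :=
    Matrix.TransvectionStruct.det_toMatrix_prod l1
  have hd2 : Matrix.det (l2.map Matrix.TransvectionStruct.toMatrix).prod = 1 :=
    Matrix.TransvectionStruct.det_toMatrix_prod l2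
  have hM : Matrix.det (g : Matrix (Fin 2) (Fin 2) F7) = 1 := g.property
  have hdD : Matrix.det (Matrix.diagonal D) = 1 := by
    have h2 := hM
    rw [hdec, Matrix.det_mul, Matrix.det_mul, hd1, hd2, one_mul, mul_one] at h2
    exact h2
  have hD01 : D 0 * D 1 = 1 := by
    rw [Matrix.det_diagonal, Fin.prod_univ_two] at hdD
    exact hdD
  have hDmat : Matrix.diagonal D = !![D 0, 0; 0, D 1] := by
    ext a b
    fin_cases a <;> fin_cases b <;> simp [Matrix.diagonal]
  have hdD' : Matrix.det !![D 0, 0; 0, D 1] = 1 := hDmat ▸ hdD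
  have hsplit : g =
      mkSL (l1.map Matrix.TransvectionStruct.toMatrix).prod hd1 *
      (mkSL !![D 0, 0; 0, D 1] hdD' *
       mkSL (l2.map Matrix.TransvectionStruct.toMatrix).prod hd2) := by
    apply Subtype.ext
    show (g : Matrix (Fin 2) (Fin 2) F7) = _
    rw [Matrix.SpecialLinearGroup.coe_mul, Matrix.SpecialLinearGroup.coe_mul]
    rw [hdec, hDmat, mul_assoc]
    rfl
  rw [hsplit]
  exact mul_mem (prodlist_mem l1 hd1)
    (mul_mem (hD (D 0) (D 1) hD01 hdD') (prodlist_mem l2 hd2))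

lemma hker : phi.ker = Subgroup.center SL7 := le_antisymm ker_le_center center_le_ker

set_option maxRecDepth 10000 in
lemma card_SL7 : Nat.card SL7 = 336 := by
  rw [Nat.card_eq_fintype_card]; decide

def negOne : SL7 := ⟨!![6, 0; 0, 6], by decide⟩

lemma sqrt1 : ∀ r : F7, r ^ 2 = 1 → r = 1 ∨ r = 6 := by decide

lemma center_eq_zpowers : Subgroup.center SL7 = Subgroup.zpowers negOne := by
  apply le_antisymm
  · intro A hA
    obtain ⟨r, hr, hsc⟩ := Matrix.SpecialLinearGroup.mem_center_iff.mp hA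
    rw [Fintype.card_fin] at hr
    have : r = 1 ∨ r = 6 := sqrt1 r hr
    rcases this with rfl | rfl
    · have : A = 1 := Subtype.ext (by rw [← hsc]; decide)
      rw [this]; exact one_mem _
    · have : A = negOne := Subtype.ext (by rw [← hsc]; decide)
      rw [this]; exact Subgroup.mem_zpowers _
  · rw [Subgroup.zpowers_le]
    refine Matrix.SpecialLinearGroup.mem_center_iff.mpr ⟨6, ?_, ?_⟩
    · rw [Fintype.card_fin]; decide
    · decide

lemma card_center : Nat.card (Subgroup.center SL7) = 2 := by
  rw [center_eq_zpowers, Nat.card_zpowers]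
  have h2 : negOne ^ 2 = 1 := Subtype.ext (by decide)
  have h1 : negOne ≠ 1 := fun h => absurd (congrArg Subtype.val h) (by decide)
  exact orderOf_eq_prime h2 h1

lemma range_eq : phi.range = Subgroup.closure {sg, tu} := by
  rw [MonoidHom.range_eq_map, ← L7_eq_top, L7, MonoidHom.map_closure]
  congr 1
  rw [Set.image_insert_eq, Set.image_singleton, phi_Am, phi_Bm]

noncomputable def isoK : (Subgroup.closure {sg, tu}) ≃* PSL27 :=
  (MulEquiv.subgroupCongr range_eq.symm).trans
    ((QuotientGroup.quotientKerEquivRange phi).symm.trans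
      (QuotientGroup.quotientMulEquivOfEq hker))

lemma card_PSL : Nat.card PSL27 = 168 := by
  show Nat.card (SL7 ⧸ Subgroup.center SL7) = 168
  have h1 : Nat.card (Subgroup.center SL7) * (Subgroup.center SL7).index = Nat.card SL7 :=
    Subgroup.card_mul_index _
  rw [card_center, card_SL7] at h1
  have h2 : (Subgroup.center SL7).index = 168 := by omega
  rw [← h2]
  rfl

lemma card_K : Nat.card (Subgroup.closure {sg, tu}) = 168 := by
  rw [Nat.card_congr isoK.toEquiv, card_PSL]

/-- In `S₈ = Equiv.Perm (Fin 8)` (on the letters `1,…,8`, identified with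
`0,…,7` in `Fin 8` via `i ↦ i − 1`), the subgroup generated by
`σ = (3 6 7)(4 5 8)` and `τ = (1 8 2)(4 5 6)` has order `168` and is
isomorphic to `PSL(2,7)`. -/
theorem closure_perms_card_168_iso_PSL27 :
    Nat.card (Subgroup.closure
        ({c[(2 : Fin 8), 5, 6] * c[(3 : Fin 8), 4, 7],
          c[(0 : Fin 8), 7, 1] * c[(3 : Fin 8), 4, 5]} : Set (Equiv.Perm (Fin 8)))) = 168 ∧
    Nonempty ((Subgroup.closure
        ({c[(2 : Fin 8), 5, 6] * c[(3 : Fin 8), 4, 7],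
          c[(0 : Fin 8), 7, 1] * c[(3 : Fin 8), 4, 5]} : Set (Equiv.Perm (Fin 8)))) ≃* PSL27) := by
  exact ⟨card_K, ⟨isoK⟩⟩
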